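/- (Gaussian Annulus Theorem) There exists an absolute constant $c > 0$ such that for a standard Gaussian vector $Z$ in $\mathbb{R}^d$ and any $t \ge 0$, $\mathbb{P}(|\|Z\| - \sqrt{d}| \ge t) \le 2\exp(-ct^2)$. -/

import Mathlib

open MeasureTheory ProbabilityTheory Real
open scoped ENNReal NNReal


lemma integral_exp_sq_gauss {b : ℝ} (hb : b < 1/2) :
    ∫ x, rexp (b * x ^ 2) ∂(gaussianReal 0 1) = (Real.sqrt (1 - 2 * b))⁻¹ := by
  have h2 : 0 < 1/2 - b := by linarith
  rw [gaussianReal_of_var_ne_zero 0 one_ne_zero]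
  have hpdf : gaussianPDF 0 1 = fun x => ((gaussianPDFReal 0 1 x).toNNReal : ℝ≥0∞) := rfl
  rw [hpdf, integral_withDensity_eq_integral_smul
      ((measurable_gaussianPDFReal 0 1).real_toNNReal)]
  have hcomb : ∀ x : ℝ, ((gaussianPDFReal 0 1 x).toNNReal : ℝ) • rexp (b * x ^ 2)
      = (Real.sqrt (2 * π))⁻¹ * rexp (-(1/2 - b) * x ^ 2) := by
    intro x
    rw [smul_eq_mul, Real.coe_toNNReal _ (gaussianPDFReal_nonneg 0 1 x), gaussianPDFReal]
    push_cast
    rw [mul_assoc, ← Real.exp_add]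
    ring_nf
  simp only [NNReal.smul_def]
  rw [show (fun x => ((gaussianPDFReal 0 1 x).toNNReal : ℝ) • rexp (b * x ^ 2))
      = fun x => (Real.sqrt (2 * π))⁻¹ * rexp (-(1/2 - b) * x ^ 2) from funext hcomb]
  rw [integral_const_mul, integral_gaussian]
  rw [Real.sqrt_div pi_pos.le, Real.sqrt_mul two_pos.le π]
  have h1 : Real.sqrt (1 - 2*b) = Real.sqrt 2 * Real.sqrt (1/2 - b) := by
    rw [← Real.sqrt_mul (by norm_num : (0:ℝ) ≤ 2)]; ring_nf
  rw [h1, mul_inv, div_eq_mul_inv, mul_inv]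
  have hπ : Real.sqrt π ≠ 0 := ne_of_gt (Real.sqrt_pos.mpr pi_pos)
  have h2' : Real.sqrt (1/2 - b) ≠ 0 := ne_of_gt (Real.sqrt_pos.mpr h2)
  have h2'' : Real.sqrt 2 ≠ 0 := by positivity
  have h3 : (0:ℝ) < √(1 - 2*b) := Real.sqrt_pos.mpr (by linarith)
  have hπ' : (0:ℝ) < √π := Real.sqrt_pos.mpr pi_pos
  have h2''' : (0:ℝ) < √2 := Real.sqrt_pos.mpr (by norm_num)
  field_simp

lemma integrable_exp_sq_gauss {b : ℝ} (hb : b < 1/2) :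
    Integrable (fun x => rexp (b * x ^ 2)) (gaussianReal 0 1) := by
  have h2 : 0 < 1/2 - b := by linarith
  rw [gaussianReal_of_var_ne_zero 0 one_ne_zero]
  have hpdf : gaussianPDF 0 1 = fun x => ((gaussianPDFReal 0 1 x).toNNReal : ℝ≥0∞) := rfl
  rw [hpdf, integrable_withDensity_iff_integrable_smul
      ((measurable_gaussianPDFReal 0 1).real_toNNReal)]
  have hcomb : ∀ x : ℝ, ((gaussianPDFReal 0 1 x).toNNReal : ℝ≥0) • rexp (b * x ^ 2)
      = (Real.sqrt (2 * π))⁻¹ * rexp (-(1/2 - b) * x ^ 2) := by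
    intro x
    rw [NNReal.smul_def, smul_eq_mul, Real.coe_toNNReal _ (gaussianPDFReal_nonneg 0 1 x),
      gaussianPDFReal]
    push_cast
    rw [mul_assoc, ← Real.exp_add]
    ring_nf
  rw [show (fun x => ((gaussianPDFReal 0 1 x).toNNReal : ℝ≥0) • rexp (b * x ^ 2))
      = fun x => (Real.sqrt (2 * π))⁻¹ * rexp (-(1/2 - b) * x ^ 2) from funext hcomb]
  exact (integrable_exp_neg_mul_sq h2).const_mul _

lemma sqrt_one_sub_inv_le {l : ℝ} (hl : |l| ≤ 1/6) :
    (Real.sqrt (1 - 2 * l))⁻¹ ≤ rexp (l + 3 * l ^ 2) := by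
  obtain ⟨hl1, hl2⟩ := abs_le.mp hl
  have hpos : (0:ℝ) < 1 - 2 * l := by linarith
  have key : rexp (-(2 * l + 6 * l ^ 2)) ≤ 1 - 2 * l := by
    rcases le_or_gt 0 l with h0 | h0
    · set a := 2 * l + 6 * l ^ 2 with ha
      have ha0 : 0 ≤ a := by positivity
      have h1 : 1 + a + a ^ 2 / 2 ≤ rexp a := Real.quadratic_le_exp_of_nonneg ha0
      have h2 : 0 < 1 + a + a ^ 2 / 2 := by positivity
      have h3 : rexp (-a) ≤ (1 + a + a ^ 2 / 2)⁻¹ := by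
        rw [Real.exp_neg]
        exact inv_anti₀ h2 h1
      refine h3.trans ?_
      rw [inv_le_iff_one_le_mul₀ h2]  -- maybe wrong name; will check
      nlinarith [sq_nonneg l, sq_nonneg (l*l)]
    · set a := 2 * l + 6 * l ^ 2 with ha
      have h1 : a + 1 ≤ rexp a := Real.add_one_le_exp a
      have h2 : 0 < 1 + a := by nlinarith
      have h3 : rexp (-a) ≤ (1 + a)⁻¹ := by
        rw [Real.exp_neg]
        exact inv_anti₀ h2 (by linarith)
      refine h3.trans ?_
      rw [inv_le_iff_one_le_mul₀ h2]
      nlinarith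
  have hsq : Real.sqrt (1 - 2 * l) * Real.sqrt (1 - 2 * l) = 1 - 2 * l :=
    Real.mul_self_sqrt hpos.le
  have hs0 : 0 < Real.sqrt (1 - 2 * l) := Real.sqrt_pos.mpr hpos
  rw [inv_le_iff_one_le_mul₀ hs0]
  -- 1 ≤ exp(l+3l²) * √(1-2l);  square both sides
  have hq : 1 ≤ (rexp (l + 3 * l ^ 2) * Real.sqrt (1 - 2 * l)) ^ 2 := by
    have : (rexp (l + 3 * l ^ 2)) ^ 2 = rexp (2 * l + 6 * l ^ 2) := by
      rw [← Real.exp_nat_mul]; ring_nf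
    calc (1:ℝ) = rexp (-(2*l + 6*l^2)) * rexp (2*l + 6*l^2) := by
          rw [← Real.exp_add, show -(2*l+6*l^2) + (2*l+6*l^2) = 0 by ring, Real.exp_zero]
      _ ≤ (1 - 2*l) * rexp (2*l+6*l^2) := by gcongr
      _ = (rexp (l + 3 * l ^ 2) * Real.sqrt (1 - 2 * l)) ^ 2 := by
          rw [mul_pow, this, Real.sq_sqrt hpos.le]; ring
  nlinarith [mul_pos (Real.exp_pos (l + 3 * l ^ 2)) hs0]
variable {Ω : Type} [MeasurableSpace Ω] {μ : Measure Ω} [IsProbabilityMeasure μ]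
  {d : ℕ} {Z : Fin d → Ω → ℝ}

section tails
variable (hm : ∀ i, Measurable (Z i))
  (hindep : iIndepFun (m := fun _ => Real.measurableSpace) Z μ)
  (hmap : ∀ i, Measure.map (Z i) μ = gaussianReal 0 1)
include hm hindep hmap
set_option linter.unusedSectionVars false

lemma sq_indep : iIndepFun (m := fun _ => Real.measurableSpace) (fun i => fun ω => Z i ω ^ 2) μ :=
  hindep.comp (fun _ => fun x : ℝ => x ^ 2) (fun _ => measurable_id'.pow_const 2)

lemma sq_int (l : ℝ) (hl : l < 1/2) (i : Fin d) :
    Integrable (fun ω => rexp (l * Z i ω ^ 2)) μ := by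
  have h := (integrable_exp_sq_gauss hl)
  rw [← hmap i] at h
  exact (integrable_map_measure (((measurable_id'.pow_const 2).const_mul l).exp.aestronglyMeasurable) (hm i).aemeasurable).mp h

lemma sq_mgf (l : ℝ) (hl : l < 1/2) (i : Fin d) :
    mgf (fun ω => Z i ω ^ 2) μ l = (Real.sqrt (1 - 2 * l))⁻¹ := by
  rw [mgf]
  have : ∫ ω, rexp (l * Z i ω ^ 2) ∂μ = ∫ x, rexp (l * x ^ 2) ∂(Measure.map (Z i) μ) := by
    rw [integral_map (hm i).aemeasurable ((measurable_id'.pow_const 2).const_mul l).exp.aestronglyMeasurable]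
  rw [this, hmap i, integral_exp_sq_gauss hl]

lemma sum_sq_int (l : ℝ) (hl : l < 1/2) :
    Integrable (fun ω => rexp (l * (∑ i, (fun ω => Z i ω ^ 2)) ω)) μ :=
  (sq_indep hm hindep hmap).integrable_exp_mul_sum (fun i => (hm i).pow_const 2)
    (fun i _ => sq_int hm hindep hmap l hl i)

lemma sum_sq_mgf (l : ℝ) (hl : l < 1/2) :
    mgf (∑ i, (fun ω => Z i ω ^ 2)) μ l = ((Real.sqrt (1 - 2 * l))⁻¹) ^ d := by
  rw [(sq_indep hm hindep hmap).mgf_sum (fun i => (hm i).pow_const 2)]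
  simp [sq_mgf hm hindep hmap l hl, inv_pow]

lemma upper_tail (s l : ℝ) (hl0 : 0 ≤ l) (hl : l ≤ 1/6) :
    (μ {ω | (d:ℝ) + s ≤ ∑ i, Z i ω ^ 2}).toReal ≤ rexp (-(l * s) + 3 * d * l ^ 2) := by
  have hl2 : l < 1/2 := by linarith
  have habs : |l| ≤ 1/6 := abs_le.mpr ⟨by linarith, hl⟩
  have hset : {ω | (d:ℝ) + s ≤ ∑ i, Z i ω ^ 2}
      = {ω | (d:ℝ) + s ≤ (∑ i, (fun ω => Z i ω ^ 2)) ω} := by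
    ext ω; simp [Finset.sum_apply]
  rw [hset]
  calc (μ _).toReal ≤ rexp (-l * ((d:ℝ) + s)) * mgf (∑ i, (fun ω => Z i ω ^ 2)) μ l :=
        measure_ge_le_exp_mul_mgf _ hl0 (sum_sq_int hm hindep hmap l hl2)
    _ ≤ rexp (-l * ((d:ℝ) + s)) * rexp (l + 3 * l ^ 2) ^ d := by
        rw [sum_sq_mgf hm hindep hmap l hl2]
        exact mul_le_mul_of_nonneg_left
          (pow_le_pow_left₀ (by positivity) (sqrt_one_sub_inv_le habs) d) (Real.exp_nonneg _)
    _ ≤ rexp (-(l * s) + 3 * d * l ^ 2) := by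
        rw [← Real.exp_nat_mul, ← Real.exp_add]
        apply Real.exp_le_exp.mpr
        ring_nf
        linarith

lemma lower_tail (s l : ℝ) (hl0 : 0 ≤ l) (hl : l ≤ 1/6) :
    (μ {ω | ∑ i, Z i ω ^ 2 ≤ (d:ℝ) - s}).toReal ≤ rexp (-(l * s) + 3 * d * l ^ 2) := by
  have hl2 : -l < 1/2 := by linarith
  have habs : |(-l)| ≤ 1/6 := by rw [abs_neg]; exact abs_le.mpr ⟨by linarith, hl⟩
  have hset : {ω | ∑ i, Z i ω ^ 2 ≤ (d:ℝ) - s}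
      = {ω | (∑ i, (fun ω => Z i ω ^ 2)) ω ≤ (d:ℝ) - s} := by
    ext ω; simp [Finset.sum_apply]
  rw [hset]
  calc (μ _).toReal ≤ rexp (-(-l) * ((d:ℝ) - s)) * mgf (∑ i, (fun ω => Z i ω ^ 2)) μ (-l) :=
        measure_le_le_exp_mul_mgf _ (neg_nonpos.mpr hl0) (sum_sq_int hm hindep hmap (-l) hl2)
    _ ≤ rexp (- -l * ((d:ℝ) - s)) * rexp (-l + 3 * l ^ 2) ^ d := by
        rw [sum_sq_mgf hm hindep hmap (-l) hl2]
        have hb : (Real.sqrt (1 - 2 * (-l)))⁻¹ ≤ rexp (-l + 3 * l ^ 2) := by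
          simpa [neg_sq] using sqrt_one_sub_inv_le habs
        exact mul_le_mul_of_nonneg_left
          (pow_le_pow_left₀ (by positivity) hb d) (Real.exp_nonneg _)
    _ ≤ rexp (-(l * s) + 3 * d * l ^ 2) := by
        rw [← Real.exp_nat_mul, ← Real.exp_add]
        apply Real.exp_le_exp.mpr
        ring_nf
        linarith
end tails

/-- Gaussian Annulus Theorem: the norm of a standard Gaussian vector in `ℝ^d`
concentrates in a constant-width shell at radius `√d`, with sub-Gaussian tails. -/
theorem gaussian_annulus :
    ∃ c : ℝ, 0 < c ∧
      ∀ (Ω : Type) (_ : MeasurableSpace Ω) (μ : Measure Ω), IsProbabilityMeasure μ →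
      ∀ (d : ℕ) (Z : Fin d → Ω → ℝ),
        (∀ i, Measurable (Z i)) →
        iIndepFun (m := fun _ => Real.measurableSpace) Z μ →
        (∀ i, Measure.map (Z i) μ = gaussianReal 0 1) →
        ∀ t : ℝ, 0 ≤ t →
          (μ {ω | t ≤ |Real.sqrt (∑ i, (Z i ω) ^ 2) - Real.sqrt d|}).toReal ≤
            2 * Real.exp (-c * t ^ 2) := by
  refine ⟨1/12, by norm_num, ?_⟩
  intro Ω mΩ μ hprob d Z hm hindep hmap t ht
  haveI := hprob
  rcases eq_or_lt_of_le ht with h0 | htpos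
  · -- t = 0 : trivial bound by 2
    have h1 : μ {ω | t ≤ |Real.sqrt (∑ i, (Z i ω) ^ 2) - Real.sqrt d|} ≤ 1 := prob_le_one
    have h2 : (μ {ω | t ≤ |Real.sqrt (∑ i, (Z i ω) ^ 2) - Real.sqrt d|}).toReal ≤ 1 := by
      calc _ ≤ (1 : ℝ≥0∞).toReal := ENNReal.toReal_mono ENNReal.one_ne_top h1
        _ = 1 := by simp
    rw [← h0]
    norm_num
  rcases Nat.eq_zero_or_pos d with hd0 | hdpos
  · subst hd0
    have hE : μ {ω | t ≤ |Real.sqrt (∑ i, (Z i ω) ^ 2) - Real.sqrt (0:ℕ)|} = 0 := by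
      convert measure_empty
      · ext ω
        simp only [Finset.univ_eq_empty, Finset.sum_empty, Real.sqrt_zero, Nat.cast_zero,
          sub_zero, abs_zero, Set.mem_setOf_eq, Set.mem_empty_iff_false, iff_false, not_le]
        exact htpos
      · infer_instance
    rw [hE]
    simp
    positivity
  -- main case : t > 0, d ≥ 1
  have hd' : (0:ℝ) < d := Nat.cast_pos.mpr hdpos
  set sd := Real.sqrt (d:ℝ) with hsddef
  have hsd : 0 < sd := Real.sqrt_pos.mpr hd'
  have hsd2 : sd ^ 2 = (d:ℝ) := Real.sq_sqrt hd'.le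
  set s₁ := 2 * sd * t + t ^ 2 with hs₁def
  set A := {ω | (d:ℝ) + s₁ ≤ ∑ i, Z i ω ^ 2} with hAdef
  set B := {ω | ∑ i, Z i ω ^ 2 ≤ (d:ℝ) - sd * t} with hBdef
  have hsub : {ω | t ≤ |Real.sqrt (∑ i, (Z i ω) ^ 2) - Real.sqrt d|} ⊆ A ∪ B := by
    intro ω hω
    simp only [Set.mem_setOf_eq] at hω
    have hS0 : 0 ≤ ∑ i, Z i ω ^ 2 := Finset.sum_nonneg fun i _ => sq_nonneg _
    have hSnn : 0 ≤ Real.sqrt (∑ i, Z i ω ^ 2) := Real.sqrt_nonneg _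
    rcases le_abs.mp hω with h | h
    · left
      show (d:ℝ) + s₁ ≤ ∑ i, Z i ω ^ 2
      have h' : sd + t ≤ Real.sqrt (∑ i, Z i ω ^ 2) := by linarith
      have h2 := mul_le_mul h' h' (by positivity) hSnn
      rw [Real.mul_self_sqrt hS0] at h2
      nlinarith [hsd2]
    · right
      show ∑ i, Z i ω ^ 2 ≤ (d:ℝ) - sd * t
      have h' : Real.sqrt (∑ i, Z i ω ^ 2) ≤ sd - t := by linarith
      have htsd : t ≤ sd := by linarith
      have h2 := mul_le_mul h' h' hSnn (by linarith)
      rw [Real.mul_self_sqrt hS0] at h2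
      nlinarith [hsd2, htpos]
  have hA : (μ A).toReal ≤ rexp (-(1/12) * t ^ 2) := by
    by_cases hcase : s₁ ≤ (d:ℝ)
    · have hs₁0 : 0 ≤ s₁ := by positivity
      have hl0 : 0 ≤ s₁ / (6 * (d:ℝ)) := by positivity
      have hl6 : s₁ / (6 * (d:ℝ)) ≤ 1/6 := by
        rw [div_le_iff₀ (by positivity)]
        linarith
      refine (upper_tail hm hindep hmap s₁ (s₁ / (6 * (d:ℝ))) hl0 hl6).trans ?_
      apply Real.exp_le_exp.mpr
      have key : (d:ℝ) * t ^ 2 ≤ s₁ ^ 2 := by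
        nlinarith [hsd2, hsd.le, ht, mul_nonneg (mul_nonneg hsd.le ht) ht]
      have e1 : -(s₁ / (6 * (d:ℝ)) * s₁) + 3 * (d:ℝ) * (s₁ / (6 * (d:ℝ))) ^ 2
          = -(s₁ ^ 2 / (12 * (d:ℝ))) := by
        field_simp
        ring
      rw [e1]
      have h3 : t ^ 2 / 12 ≤ s₁ ^ 2 / (12 * (d:ℝ)) := by
        rw [div_le_div_iff₀ (by norm_num) (by positivity)]
        nlinarith [key]
      linarith
    · refine (upper_tail hm hindep hmap s₁ (1/6) (by norm_num) le_rfl).trans ?_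
      apply Real.exp_le_exp.mpr
      have ht2 : t ^ 2 ≤ s₁ := by nlinarith [mul_nonneg hsd.le ht]
      push_neg at hcase
      nlinarith
  have hB : (μ B).toReal ≤ rexp (-(1/12) * t ^ 2) := by
    by_cases hts : t ≤ sd
    · have hl0 : 0 ≤ t / (6 * sd) := by positivity
      have hl6 : t / (6 * sd) ≤ 1/6 := by
        rw [div_le_iff₀ (by positivity)]
        linarith
      refine (lower_tail hm hindep hmap (sd * t) (t / (6 * sd)) hl0 hl6).trans ?_
      apply le_of_eq
      congr 1
      have hdsd : (d:ℝ) = sd ^ 2 := hsd2.symm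
      rw [hdsd]
      field_simp
      ring
    · have hBempty : B = ∅ := by
        ext ω
        simp only [hBdef, Set.mem_setOf_eq, Set.mem_empty_iff_false, iff_false, not_le]
        have hS0 : 0 ≤ ∑ i, Z i ω ^ 2 := Finset.sum_nonneg fun i _ => sq_nonneg _
        push_neg at hts
        nlinarith [hsd2, hsd]
      rw [hBempty]
      simp
      positivity
  calc (μ {ω | t ≤ |Real.sqrt (∑ i, (Z i ω) ^ 2) - Real.sqrt d|}).toReal
      ≤ (μ (A ∪ B)).toReal := ENNReal.toReal_mono (measure_ne_top μ _) (measure_mono hsub)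
    _ ≤ (μ A).toReal + (μ B).toReal := by
        rw [← ENNReal.toReal_add (measure_ne_top μ A) (measure_ne_top μ B)]
        exact ENNReal.toReal_mono
          (ENNReal.add_ne_top.mpr ⟨measure_ne_top μ A, measure_ne_top μ B⟩)
          (measure_union_le A B)
    _ ≤ 2 * rexp (-(1/12) * t ^ 2) := by linarith
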